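/- For a standard bivariate Gaussian pair (g, h) with correlation ρ, the expectation E[max(g,0)·max(h,0)] equals (1/(2π))(√(1-ρ²) + ρ(π - arccos ρ)). -/

import Mathlib

open MeasureTheory ProbabilityTheory Real Set Filter Topology

lemma radial_integral : ∫ r in Ioi (0:ℝ), r ^ 3 * Real.exp (-r ^ 2 / 2) = 2 := by
  have hint : IntegrableOn (fun r : ℝ => r ^ 3 * Real.exp (-r ^ 2 / 2)) (Ioi 0) := by
    have := integrableOn_rpow_mul_exp_neg_mul_sq (b := 1/2) (by norm_num) (s := 3) (by norm_num)
    refine this.congr_fun (fun x hx => ?_) measurableSet_Ioi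
    dsimp only
    rw [show ((3:ℝ)) = ((3:ℕ):ℝ) by norm_num, Real.rpow_natCast]
    ring_nf
  have hderiv : ∀ x ∈ Ioi (0:ℝ), HasDerivAt (fun r : ℝ => -(r ^ 2 + 2) * Real.exp (-r ^ 2 / 2))
      (x ^ 3 * Real.exp (-x ^ 2 / 2)) x := by
    intro x _
    have h1 : HasDerivAt (fun r : ℝ => -r ^ 2 / 2) (-x) x := by
      have := (hasDerivAt_pow 2 x).neg.div_const 2
      exact this.congr_deriv (by ring)
    have h2 : HasDerivAt (fun r : ℝ => Real.exp (-r ^ 2 / 2)) (Real.exp (-x ^ 2 / 2) * (-x)) x :=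
      h1.exp
    have h3 : HasDerivAt (fun r : ℝ => -(r ^ 2 + 2)) (-(2 * x)) x := by
      have := ((hasDerivAt_pow 2 x).add_const 2).neg
      exact this.congr_deriv (by norm_num)
    have := h3.mul h2
    exact this.congr_deriv (by ring)
  have htend : Tendsto (fun r : ℝ => -(r ^ 2 + 2) * Real.exp (-r ^ 2 / 2)) atTop (𝓝 0) := by
    have hu : Tendsto (fun r : ℝ => r ^ 2 / 2) atTop atTop :=
      (tendsto_pow_atTop two_ne_zero).atTop_div_const (by norm_num)
    have hg : Tendsto (fun u : ℝ => -(2 * u + 2) * Real.exp (-u)) atTop (𝓝 0) := by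
      have t1 := Real.tendsto_pow_mul_exp_neg_atTop_nhds_zero 1
      simp only [pow_one] at t1
      have t2 := Real.tendsto_exp_neg_atTop_nhds_zero
      have := ((t1.const_mul (-2)).add (t2.const_mul (-2)))
      norm_num at this
      refine this.congr fun u => by ring
    have := hg.comp hu
    refine this.congr fun r => ?_
    simp only [Function.comp_apply]
    ring_nf
  have h0 : ContinuousWithinAt (fun r : ℝ => -(r ^ 2 + 2) * Real.exp (-r ^ 2 / 2)) (Ici 0) 0 :=
    (Continuous.continuousWithinAt (by continuity))
  have := integral_Ioi_of_hasDerivAt_of_tendsto h0 hderiv hint htend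
  simpa using this

lemma trig_integral (ρ : ℝ) (h1 : -1 ≤ ρ) (h2 : ρ ≤ 1) :
    ∫ θ in Ioo (-π) π, max (Real.cos θ) 0 * max (ρ * Real.cos θ + Real.sqrt (1 - ρ ^ 2) * Real.sin θ) 0
      = (Real.sqrt (1 - ρ ^ 2) + ρ * (π - Real.arccos ρ)) / 2 := by
  set α := Real.arcsin ρ with hα
  have hρ : ρ = Real.sin α := (Real.sin_arcsin h1 h2).symm
  have hsq : Real.sqrt (1 - ρ ^ 2) = Real.cos α := (Real.cos_arcsin ρ).symm
  have hα1 : -(π / 2) ≤ α := Real.neg_pi_div_two_le_arcsin ρ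
  have hα2 : α ≤ π / 2 := Real.arcsin_le_pi_div_two ρ
  have hpi : 0 < π := Real.pi_pos
  -- pointwise identity
  have hpt : ∀ θ ∈ Ioo (-π) π,
      max (Real.cos θ) 0 * max (ρ * Real.cos θ + Real.sqrt (1 - ρ ^ 2) * Real.sin θ) 0
        = (Ioo (-α) (π / 2)).indicator
            (fun θ => Real.cos θ * (ρ * Real.cos θ + Real.sqrt (1 - ρ ^ 2) * Real.sin θ)) θ := by
    intro θ hθ
    have hform : ρ * Real.cos θ + Real.sqrt (1 - ρ ^ 2) * Real.sin θ = Real.sin (α + θ) := by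
      rw [hsq, hρ, Real.sin_add]
    by_cases hmem : θ ∈ Ioo (-α) (π / 2)
    · have hcos : 0 < Real.cos θ :=
        Real.cos_pos_of_mem_Ioo ⟨by linarith [hmem.1], hmem.2⟩
      have hsin : 0 < Real.sin (α + θ) := by
        apply Real.sin_pos_of_pos_of_lt_pi
        · linarith [hmem.1]
        · have := hmem.2; have := Real.pi_gt_three; linarith
      rw [indicator_of_mem hmem, max_eq_left hcos.le, hform, max_eq_left hsin.le]
    · rw [indicator_of_notMem hmem]
      simp only [mem_Ioo, not_and_or, not_lt] at hmem
      rcases hmem with hle | hge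
      · -- θ ≤ -α
        by_cases hc : Real.cos θ ≤ 0
        · rw [max_eq_right hc, zero_mul]
        · push_neg at hc
          have hθ2 : -(π/2) < θ := by
            by_contra hcon
            push_neg at hcon
            have : Real.cos θ ≤ 0 := by
              rw [← Real.cos_neg]
              apply Real.cos_nonpos_of_pi_div_two_le_of_le <;> [linarith; linarith [hθ.1]]
            linarith
          have : Real.sin (α + θ) ≤ 0 :=
            Real.sin_nonpos_of_nonpos_of_neg_pi_le (by linarith) (by linarith)
          rw [hform, max_eq_right this, mul_zero]
      · -- π/2 ≤ θ
        have hc : Real.cos θ ≤ 0 :=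
          Real.cos_nonpos_of_pi_div_two_le_of_le hge (by linarith [hθ.2])
        rw [max_eq_right hc, zero_mul]
  rw [setIntegral_congr_fun measurableSet_Ioo hpt,
    setIntegral_indicator measurableSet_Ioo]
  have hss : Ioo (-π) π ∩ Ioo (-α) (π / 2) = Ioo (-α) (π / 2) := by
    apply inter_eq_self_of_subset_right
    intro x hx
    exact ⟨by linarith [hx.1], by linarith [hx.2]⟩
  rw [hss, ← integral_Ioc_eq_integral_Ioo,
    ← intervalIntegral.integral_of_le (by linarith : -α ≤ π / 2)]
  have : ∀ θ : ℝ, Real.cos θ * (ρ * Real.cos θ + Real.sqrt (1 - ρ ^ 2) * Real.sin θ)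
      = ρ * Real.cos θ ^ 2 + Real.sqrt (1 - ρ ^ 2) * (Real.sin θ * Real.cos θ) := by
    intro θ; ring
  simp_rw [this]
  rw [intervalIntegral.integral_add, intervalIntegral.integral_const_mul,
    intervalIntegral.integral_const_mul, integral_cos_sq, integral_sin_mul_cos₁]
  · rw [hsq, hρ]
    have harc : π - Real.arccos (Real.sin α) = π / 2 + α := by
      rw [← hρ, Real.arccos_eq_pi_div_two_sub_arcsin, ← hα]; ring
    rw [harc]
    simp [Real.cos_pi_div_two, Real.sin_pi_div_two, Real.sin_neg, Real.cos_neg]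
    ring
  · exact (continuous_const.mul (Real.continuous_cos.pow 2)).intervalIntegrable _ _
  · exact (continuous_const.mul (Real.continuous_sin.mul Real.continuous_cos)).intervalIntegrable _ _

lemma gaussian_prod_eq :
    (gaussianReal 0 1).prod (gaussianReal 0 1)
      = (volume : Measure (ℝ × ℝ)).withDensity
          (fun p => ((gaussianPDFReal 0 1 p.1 * gaussianPDFReal 0 1 p.2).toNNReal : ENNReal)) := by
  have hmeas : Measurable fun p : ℝ × ℝ =>
      ((gaussianPDFReal 0 1 p.1 * gaussianPDFReal 0 1 p.2).toNNReal : ENNReal) :=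
    (((measurable_gaussianPDFReal 0 1).comp measurable_fst).mul
      ((measurable_gaussianPDFReal 0 1).comp measurable_snd)).real_toNNReal.coe_nnreal_ennreal
  refine Measure.prod_eq fun s t hs ht => ?_
  rw [Measure.volume_eq_prod, withDensity_apply _ (hs.prod ht), ← Measure.prod_restrict]
  have : ∀ p : ℝ × ℝ, ((gaussianPDFReal 0 1 p.1 * gaussianPDFReal 0 1 p.2).toNNReal : ENNReal)
      = gaussianPDF 0 1 p.1 * gaussianPDF 0 1 p.2 := by
    intro p
    simp only [gaussianPDF_def, ENNReal.ofReal,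
      Real.toNNReal_mul (gaussianPDFReal_nonneg 0 1 p.1)]
    push_cast
    ring
  simp_rw [this]
  rw [lintegral_prod_mul
    ((measurable_gaussianPDF 0 1).aemeasurable) ((measurable_gaussianPDF 0 1).aemeasurable)]
  rw [gaussianReal_apply _ one_ne_zero s, gaussianReal_apply _ one_ne_zero t]

lemma gaussian_pdf_polar (r θ : ℝ) :
    gaussianPDFReal 0 1 (r * Real.cos θ) * gaussianPDFReal 0 1 (r * Real.sin θ)
      = (2 * π)⁻¹ * Real.exp (-r ^ 2 / 2) := by
  simp only [gaussianPDFReal, NNReal.coe_one, mul_one, sub_zero, one_div]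
  have h1 : (Real.sqrt (2 * π))⁻¹ * (Real.sqrt (2 * π))⁻¹ = (2 * π)⁻¹ := by
    rw [← mul_inv, Real.mul_self_sqrt (by positivity)]
  have h2 : Real.exp (-(r * Real.cos θ) ^ 2 / 2) * Real.exp (-(r * Real.sin θ) ^ 2 / 2)
      = Real.exp (-r ^ 2 / 2) := by
    rw [← Real.exp_add]
    congr 1
    rw [show -(r * Real.cos θ) ^ 2 / 2 + -(r * Real.sin θ) ^ 2 / 2
        = -(r ^ 2 * (Real.sin θ ^ 2 + Real.cos θ ^ 2)) / 2 by ring,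
      Real.sin_sq_add_cos_sq]
    ring
  calc (Real.sqrt (2 * π))⁻¹ * Real.exp (-(r * Real.cos θ) ^ 2 / 2)
        * ((Real.sqrt (2 * π))⁻¹ * Real.exp (-(r * Real.sin θ) ^ 2 / 2))
      = ((Real.sqrt (2 * π))⁻¹ * (Real.sqrt (2 * π))⁻¹)
        * (Real.exp (-(r * Real.cos θ) ^ 2 / 2) * Real.exp (-(r * Real.sin θ) ^ 2 / 2)) := by ring
    _ = (2 * π)⁻¹ * Real.exp (-r ^ 2 / 2) := by rw [h1, h2]

/-- For a standard bivariate Gaussian pair `(g, h)` with correlation `ρ`, realized as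
`(g, h) = (x, ρx + √(1-ρ²)y)` with `x, y` independent standard Gaussians,
`E[max(g,0) max(h,0)] = (1/(2π))(√(1-ρ²) + ρ(π - arccos ρ))`. -/
theorem relu_bivariate_gaussian_moment (ρ : ℝ) (hρ : ρ ∈ Set.Icc (-1 : ℝ) 1) :
    ∫ p : ℝ × ℝ, max p.1 0 * max (ρ * p.1 + Real.sqrt (1 - ρ ^ 2) * p.2) 0
        ∂((gaussianReal 0 1).prod (gaussianReal 0 1))
      = (1 / (2 * Real.pi)) *
          (Real.sqrt (1 - ρ ^ 2) + ρ * (Real.pi - Real.arccos ρ)) := by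
  obtain ⟨h1, h2⟩ := hρ
  have hmeasNN : Measurable fun p : ℝ × ℝ =>
      (gaussianPDFReal 0 1 p.1 * gaussianPDFReal 0 1 p.2).toNNReal :=
    (((measurable_gaussianPDFReal 0 1).comp measurable_fst).mul
      ((measurable_gaussianPDFReal 0 1).comp measurable_snd)).real_toNNReal
  rw [gaussian_prod_eq, integral_withDensity_eq_integral_smul hmeasNN]
  have hsmul : ∀ p : ℝ × ℝ,
      (gaussianPDFReal 0 1 p.1 * gaussianPDFReal 0 1 p.2).toNNReal
          • (max p.1 0 * max (ρ * p.1 + Real.sqrt (1 - ρ ^ 2) * p.2) 0)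
        = (gaussianPDFReal 0 1 p.1 * gaussianPDFReal 0 1 p.2)
            * (max p.1 0 * max (ρ * p.1 + Real.sqrt (1 - ρ ^ 2) * p.2) 0) := by
    intro p
    rw [NNReal.smul_def, Real.coe_toNNReal _
      (mul_nonneg (gaussianPDFReal_nonneg 0 1 p.1) (gaussianPDFReal_nonneg 0 1 p.2)),
      smul_eq_mul]
  simp_rw [hsmul]
  rw [← integral_comp_polarCoord_symm]
  have htarget : polarCoord.target = Ioi (0:ℝ) ×ˢ Ioo (-π) π := rfl
  rw [htarget]
  rw [setIntegral_congr_fun (measurableSet_Ioi.prod measurableSet_Ioo)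
    (g := fun p : ℝ × ℝ => (p.1 ^ 3 * Real.exp (-p.1 ^ 2 / 2))
      * ((2 * π)⁻¹ * (max (Real.cos p.2) 0
          * max (ρ * Real.cos p.2 + Real.sqrt (1 - ρ ^ 2) * Real.sin p.2) 0)))
    ?_]
  · rw [Measure.volume_eq_prod,
      setIntegral_prod_mul (μ := (volume : Measure ℝ)) (ν := (volume : Measure ℝ))
        (f := fun r : ℝ => r ^ 3 * Real.exp (-r ^ 2 / 2))
        (g := fun θ : ℝ => (2 * π)⁻¹ * (max (Real.cos θ) 0
          * max (ρ * Real.cos θ + Real.sqrt (1 - ρ ^ 2) * Real.sin θ) 0))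
        (Ioi 0) (Ioo (-π) π),
      radial_integral,
      MeasureTheory.integral_const_mul, trig_integral ρ h1 h2]
    have hπ : (0:ℝ) < π := Real.pi_pos
    field_simp
  · rintro ⟨r, θ⟩ ⟨hr, hθ⟩
    have hr' : (0:ℝ) < r := hr
    have hsymm : polarCoord.symm (r, θ) = (r * Real.cos θ, r * Real.sin θ) := rfl
    simp only [hsymm, gaussian_pdf_polar]
    have hm1 : max (r * Real.cos θ) 0 = r * max (Real.cos θ) 0 := by
      rw [mul_max_of_nonneg _ _ hr'.le, mul_zero]
    have hm2 : max (ρ * (r * Real.cos θ) + Real.sqrt (1 - ρ ^ 2) * (r * Real.sin θ)) 0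
        = r * max (ρ * Real.cos θ + Real.sqrt (1 - ρ ^ 2) * Real.sin θ) 0 := by
      rw [mul_max_of_nonneg _ _ hr'.le, mul_zero]
      congr 1
      ring
    rw [hm1, hm2, smul_eq_mul]
    ring
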